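/- Under Assumptions 1 and 2, for every scalar α > 0 with α < α*, the maximal RPI set P_max^α is a C-set in ℝ^n (convex, compact, with the origin in its interior). -/

import Mathlib

open Matrix Set Pointwise

namespace RPIScaling

/-- A C-set in `ℝ^p`: convex, compact, containing the origin in its interior. -/
def IsCSet {p : ℕ} (S : Set (Fin p → ℝ)) : Prop :=
  Convex ℝ S ∧ IsCompact S ∧ (0 : Fin p → ℝ) ∈ interior S

/-- Pontryagin difference `U ⊖ V`. -/
def pontryaginDiff {p : ℕ} (U V : Set (Fin p → ℝ)) : Set (Fin p → ℝ) :=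
  {x | ∀ v ∈ V, x + v ∈ U}

/-- Upper-left `r × r` block of `A`. -/
def blockA11 {n r : ℕ} (hrn : r ≤ n) (A : Matrix (Fin n) (Fin n) ℝ) :
    Matrix (Fin r) (Fin r) ℝ :=
  A.submatrix (Fin.castLE hrn) (Fin.castLE hrn)

/-- Upper `r × m` block of `E`. -/
def blockE1 {n m r : ℕ} (hrn : r ≤ n) (E : Matrix (Fin n) (Fin m) ℝ) :
    Matrix (Fin r) (Fin m) ℝ :=
  E.submatrix (Fin.castLE hrn) id

/-- Lower-right `(n-r) × (n-r)` block of `A`. -/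
def blockA22 {n : ℕ} (r : ℕ) (A : Matrix (Fin n) (Fin n) ℝ) :
    Matrix (Fin (n - r)) (Fin (n - r)) ℝ :=
  A.submatrix (fun i => ⟨r + i.1, by have h := i.2; omega⟩)
    (fun i => ⟨r + i.1, by have h := i.2; omega⟩)

/-- The controllability matrix `[E₁, A₁₁E₁, …, A₁₁^{r-1}E₁]` of the pair `(A₁₁, E₁)`. -/
def controllabilityMatrix {n m r : ℕ} (hrn : r ≤ n) (A : Matrix (Fin n) (Fin n) ℝ)
    (E : Matrix (Fin n) (Fin m) ℝ) : Matrix (Fin r) (Fin r × Fin m) ℝ :=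
  Matrix.of fun i p => ((blockA11 hrn A) ^ (p.1 : ℕ) * blockE1 hrn E) i p.2

/-- Assumption 1: block structure of `A` and `E`, controllability of `(A₁₁, E₁)`,
and `𝒳`, `𝒟*` are C-sets. -/
structure Assumption1 {n m r : ℕ} (hrn : r ≤ n) (A : Matrix (Fin n) (Fin n) ℝ)
    (E : Matrix (Fin n) (Fin m) ℝ) (X : Set (Fin n → ℝ)) (D : Set (Fin m → ℝ)) : Prop where
  hn : 0 < n
  hm : 0 < m
  hr : 0 < r
  lowerLeftA : ∀ i j : Fin n, r ≤ (i : ℕ) → (j : ℕ) < r → A i j = 0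
  lowerE : ∀ i : Fin n, r ≤ (i : ℕ) → ∀ j, E i j = 0
  controllable : (controllabilityMatrix hrn A E).rank = r
  hX : IsCSet X
  hD : IsCSet D

/-- All complex eigenvalues of `M` have modulus `< 1`. -/
def StrictlyStable {p : ℕ} (M : Matrix (Fin p) (Fin p) ℝ) : Prop :=
  ∀ μ ∈ spectrum ℂ (M.map (algebraMap ℝ ℂ)), ‖μ‖ < 1

/-- All complex eigenvalues of `M` have modulus `≤ 1`. -/
def Stable {p : ℕ} (M : Matrix (Fin p) (Fin p) ℝ) : Prop :=
  ∀ μ ∈ spectrum ℂ (M.map (algebraMap ℝ ℂ)), ‖μ‖ ≤ 1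

/-- Assumption 2: the eigenvalues of `A₁₁` and `A₂₂` are strictly stable. -/
def Assumption2 {n r : ℕ} (hrn : r ≤ n) (A : Matrix (Fin n) (Fin n) ℝ) : Prop :=
  StrictlyStable (blockA11 hrn A) ∧ StrictlyStable (blockA22 r A)

/-- Assumption 2': the eigenvalues of `A₂₂` are stable. -/
def Assumption2' {n : ℕ} (r : ℕ) (A : Matrix (Fin n) (Fin n) ℝ) : Prop :=
  Stable (blockA22 r A)

/-- `P` is robust positively invariant for disturbance scaling `α`. -/
def IsRPI {n m : ℕ} (A : Matrix (Fin n) (Fin n) ℝ) (E : Matrix (Fin n) (Fin m) ℝ)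
    (X : Set (Fin n → ℝ)) (D : Set (Fin m → ℝ)) (α : ℝ) (P : Set (Fin n → ℝ)) : Prop :=
  P ⊆ X ∧ ∀ x ∈ P, ∀ d ∈ α • D, A.mulVec x + E.mulVec d ∈ P

/-- The maximal RPI set: the union of all RPI sets. -/
def Pmax {n m : ℕ} (A : Matrix (Fin n) (Fin n) ℝ) (E : Matrix (Fin n) (Fin m) ℝ)
    (X : Set (Fin n → ℝ)) (D : Set (Fin m → ℝ)) (α : ℝ) : Set (Fin n → ℝ) :=
  ⋃₀ {P | IsRPI A E X D α P}

/-- The minimal RPI set: the intersection of all nonempty RPI sets together with the MRPI set. -/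
def Pmin {n m : ℕ} (A : Matrix (Fin n) (Fin n) ℝ) (E : Matrix (Fin n) (Fin m) ℝ)
    (X : Set (Fin n → ℝ)) (D : Set (Fin m → ℝ)) (α : ℝ) : Set (Fin n → ℝ) :=
  ⋂₀ ({P | IsRPI A E X D α P ∧ P.Nonempty} ∪ {Pmax A E X D α})

/-- The sequence `S_k^α`. -/
def Sseq {n m : ℕ} (A : Matrix (Fin n) (Fin n) ℝ) (E : Matrix (Fin n) (Fin m) ℝ)
    (X : Set (Fin n → ℝ)) (D : Set (Fin m → ℝ)) (α : ℝ) : ℕ → Set (Fin n → ℝ)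
  | 0 => X
  | k + 1 => A.mulVec ⁻¹' (pontryaginDiff (Sseq A E X D α k) (E.mulVec '' (α • D))) ∩ X

/-- The limit set `S_∞^α`. -/
def Sinf {n m : ℕ} (A : Matrix (Fin n) (Fin n) ℝ) (E : Matrix (Fin n) (Fin m) ℝ)
    (X : Set (Fin n → ℝ)) (D : Set (Fin m → ℝ)) (α : ℝ) : Set (Fin n → ℝ) :=
  ⋂ k : ℕ, Sseq A E X D α k

/-- The sequence `R_k^α` of reachable sets. -/
def Rseq {n m : ℕ} (A : Matrix (Fin n) (Fin n) ℝ) (E : Matrix (Fin n) (Fin m) ℝ)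
    (D : Set (Fin m → ℝ)) (α : ℝ) : ℕ → Set (Fin n → ℝ)
  | 0 => {0}
  | k + 1 => A.mulVec '' (Rseq A E D α k) + E.mulVec '' (α • D)

/-- The limit set `R_∞^α`. -/
def Rinf {n m : ℕ} (A : Matrix (Fin n) (Fin n) ℝ) (E : Matrix (Fin n) (Fin m) ℝ)
    (D : Set (Fin m → ℝ)) (α : ℝ) : Set (Fin n → ℝ) :=
  ⋃ k : ℕ, Rseq A E D α k

/-- The critical scaling factor `α*`. -/
noncomputable def alphaStar {n m : ℕ} (A : Matrix (Fin n) (Fin n) ℝ)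
    (E : Matrix (Fin n) (Fin m) ℝ) (X : Set (Fin n → ℝ)) (D : Set (Fin m → ℝ)) : ℝ :=
  sSup {α : ℝ | 0 < α ∧ Rinf A E D α ⊆ X}

/-- The sequence `Q_k^α` used to characterize the maximal controlled invariant set. -/
def Qseq {n m : ℕ} (A : Matrix (Fin n) (Fin n) ℝ) (E : Matrix (Fin n) (Fin m) ℝ)
    (X : Set (Fin n → ℝ)) (D : Set (Fin m → ℝ)) (α : ℝ) : ℕ → Set (Fin n → ℝ)
  | 0 => X
  | k + 1 => A.mulVec ⁻¹' (Qseq A E X D α k + -(E.mulVec '' (α • D))) ∩ X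

/-- `C` is controlled invariant for input-constraint scaling `α`. -/
def IsCI {n m : ℕ} (A : Matrix (Fin n) (Fin n) ℝ) (E : Matrix (Fin n) (Fin m) ℝ)
    (X : Set (Fin n → ℝ)) (D : Set (Fin m → ℝ)) (α : ℝ) (C : Set (Fin n → ℝ)) : Prop :=
  C ⊆ X ∧ ∀ x ∈ C, ∃ d ∈ α • D, A.mulVec x + E.mulVec d ∈ C

/-- The maximal controlled invariant set: the union of all CI sets. -/
def Cmax {n m : ℕ} (A : Matrix (Fin n) (Fin n) ℝ) (E : Matrix (Fin n) (Fin m) ℝ)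
    (X : Set (Fin n → ℝ)) (D : Set (Fin m → ℝ)) (α : ℝ) : Set (Fin n → ℝ) :=
  ⋃₀ {C | IsCI A E X D α C}

/-- The Minkowski sum `W = ⨁_{k=0}^{M-1} A₁₁^k E₁ 𝒟*`. -/
def Wset {n m r : ℕ} (hrn : r ≤ n) (A : Matrix (Fin n) (Fin n) ℝ)
    (E : Matrix (Fin n) (Fin m) ℝ) (D : Set (Fin m → ℝ)) (M : ℕ) : Set (Fin r → ℝ) :=
  {w | ∃ d : Fin M → Fin m → ℝ, (∀ i, d i ∈ D) ∧
    w = ∑ i : Fin M, ((blockA11 hrn A) ^ (i : ℕ) * blockE1 hrn E).mulVec (d i)}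

/-! ### Auxiliary lemmas for the main theorem -/

section Aux

open Filter

open scoped ENNReal NNReal

attribute [local instance] Matrix.linftyOpNormedAddCommGroup Matrix.linftyOpNormedRing
  Matrix.linftyOpNormedAlgebra

variable {n m : ℕ} (A : Matrix (Fin n) (Fin n) ℝ) (E : Matrix (Fin n) (Fin m) ℝ)
  (X : Set (Fin n → ℝ)) (D : Set (Fin m → ℝ)) (α : ℝ)

lemma image_mulVec_smul {p q : ℕ} (M : Matrix (Fin p) (Fin q) ℝ) (c : ℝ) (S : Set (Fin q → ℝ)) :
    M.mulVec '' (c • S) = c • (M.mulVec '' S) := by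
  ext x
  simp only [Set.mem_image, Set.mem_smul_set]
  constructor
  · rintro ⟨y, ⟨s, hs, rfl⟩, rfl⟩
    exact ⟨M.mulVec s, ⟨s, hs, rfl⟩, (M.mulVec_smul c s).symm⟩
  · rintro ⟨y, ⟨s, hs, rfl⟩, rfl⟩
    exact ⟨c • s, ⟨s, hs, rfl⟩, M.mulVec_smul c s⟩

lemma smul_set_add' {p : ℕ} (c : ℝ) (S T : Set (Fin p → ℝ)) : c • (S + T) = c • S + c • T := by
  ext x
  simp only [Set.mem_smul_set, Set.mem_add]
  constructor
  · rintro ⟨y, ⟨s, hs, t, ht, rfl⟩, rfl⟩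
    exact ⟨c • s, ⟨s, hs, rfl⟩, c • t, ⟨t, ht, rfl⟩, (smul_add c s t).symm⟩
  · rintro ⟨y, ⟨s, hs, rfl⟩, z, ⟨t, ht, rfl⟩, rfl⟩
    exact ⟨s + t, ⟨s, hs, t, ht, rfl⟩, smul_add c s t⟩

lemma Rseq_scale {β : ℝ} (hβ : β ≠ 0) (k : ℕ) :
    Rseq A E D α k = (α / β) • Rseq A E D β k := by
  induction k with
  | zero => simp [Rseq, Set.smul_set_singleton]
  | succ k ih =>
    show A.mulVec '' (Rseq A E D α k) + E.mulVec '' (α • D) =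
      (α / β) • (A.mulVec '' (Rseq A E D β k) + E.mulVec '' (β • D))
    rw [ih, image_mulVec_smul, smul_set_add', ← image_mulVec_smul E, smul_smul,
      div_mul_cancel₀ α hβ]

lemma pmax_isRPI : IsRPI A E X D α (Pmax A E X D α) := by
  constructor
  · rintro x ⟨P, hP, hx⟩
    exact hP.1 hx
  · rintro x ⟨P, hP, hx⟩ d hd
    exact ⟨P, hP, hP.2 x hx d hd⟩

lemma subset_pmax {P : Set (Fin n → ℝ)} (hP : IsRPI A E X D α P) : P ⊆ Pmax A E X D α :=
  fun _ hx => ⟨P, hP, hx⟩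

lemma isRPI_convexHull (hXconv : Convex ℝ X) {P : Set (Fin n → ℝ)}
    (hP : IsRPI A E X D α P) : IsRPI A E X D α (convexHull ℝ P) := by
  constructor
  · exact convexHull_min hP.1 hXconv
  · intro x hx d hd
    let f : (Fin n → ℝ) →ᵃ[ℝ] (Fin n → ℝ) :=
      { toFun := fun y => A.mulVec y + E.mulVec d
        linear := A.mulVecLin
        map_vadd' := by
          intro p v
          simp only [vadd_eq_add, Matrix.mulVec_add, Matrix.mulVecLin_apply]
          abel }
    have himg : f '' P ⊆ P := by
      rintro y ⟨x', hx', rfl⟩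
      exact hP.2 x' hx' d hd
    have h1 : f x ∈ f '' convexHull ℝ P := Set.mem_image_of_mem f hx
    rw [AffineMap.image_convexHull] at h1
    exact convexHull_min (himg.trans (subset_convexHull ℝ P)) (convex_convexHull ℝ P) h1

lemma isRPI_closure (hXcl : IsClosed X) {P : Set (Fin n → ℝ)}
    (hP : IsRPI A E X D α P) : IsRPI A E X D α (closure P) := by
  constructor
  · exact closure_minimal hP.1 hXcl
  · intro x hx d hd
    have hcont : Continuous fun y : Fin n → ℝ => A.mulVec y + E.mulVec d := by
      have : Continuous fun y : Fin n → ℝ => A.mulVec y := by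
        have := (Matrix.mulVecLin A).continuous_of_finiteDimensional
        exact this
      exact this.add continuous_const
    have himg : (fun y : Fin n → ℝ => A.mulVec y + E.mulVec d) '' P ⊆ P := by
      rintro y ⟨x', hx', rfl⟩
      exact hP.2 x' hx' d hd
    have h1 := image_closure_subset_closure_image hcont (s := P)
      (Set.mem_image_of_mem _ hx)
    exact closure_mono himg h1

lemma linfty_nnnorm_map {p q : ℕ} (P : Matrix (Fin p) (Fin q) ℝ) :
    ‖P.map (algebraMap ℝ ℂ)‖₊ = ‖P‖₊ := by
  simp only [Matrix.linfty_opNNNorm_def, Matrix.map_apply]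
  congr 1
  ext i
  congr 1
  ext j
  simp [Complex.nnnorm_real]

lemma exists_pow_bound {p : ℕ} (M : Matrix (Fin p) (Fin p) ℝ) (h : StrictlyStable M) :
    ∃ C : ℝ, 0 < C ∧ ∀ (k : ℕ) (x : Fin p → ℝ), ‖(M ^ k).mulVec x‖ ≤ C * ‖x‖ := by
  rcases isEmpty_or_nonempty (Fin p) with hp | hp
  · refine ⟨1, one_pos, fun k x => ?_⟩
    have : (M ^ k).mulVec x = 0 := Subsingleton.elim _ _
    rw [this, norm_zero, one_mul]
    exact norm_nonneg x
  · set a : Matrix (Fin p) (Fin p) ℂ := M.map (algebraMap ℝ ℂ) with ha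
    haveI : CompleteSpace (Matrix (Fin p) (Fin p) ℂ) := FiniteDimensional.complete ℂ _
    have hrad : spectralRadius ℂ a < 1 := by
      have := spectrum.spectralRadius_lt_of_forall_lt a (r := 1) (fun z hz => by
        have := h z hz
        exact_mod_cast this)
      simpa using this
    have htends := spectrum.pow_nnnorm_pow_one_div_tendsto_nhds_spectralRadius a
    have hev : ∀ᶠ (k : ℕ) in atTop, ((‖a ^ k‖₊ : ℝ≥0∞) ^ (1 / (k : ℝ))) < 1 :=
      htends.eventually_lt_const hrad
    obtain ⟨N, hN⟩ := eventually_atTop.mp hev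
    have hbig : ∀ k, N + 1 ≤ k → ‖a ^ k‖₊ ≤ 1 := by
      intro k hk
      by_contra h'
      push_neg at h'
      have h1 : (1 : ℝ≥0∞) ≤ (‖a ^ k‖₊ : ℝ≥0∞) := by exact_mod_cast h'.le
      have hkpos : (0 : ℝ) < 1 / (k : ℝ) := by
        have : (0 : ℝ) < (k : ℝ) := by exact_mod_cast Nat.lt_of_lt_of_le (Nat.succ_pos N) hk
        positivity
      have : (1 : ℝ≥0∞) ≤ (‖a ^ k‖₊ : ℝ≥0∞) ^ (1 / (k : ℝ)) := ENNReal.one_le_rpow h1 hkpos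
      exact absurd (hN k (le_of_lt (Nat.lt_of_lt_of_le (Nat.lt_succ_self N) hk)))
        (not_lt.mpr this)
    set C₀ : ℝ := (Finset.range (N + 1)).sup' (Finset.nonempty_range_iff.mpr (Nat.succ_ne_zero N))
      (fun k => ‖M ^ k‖) with hC₀
    refine ⟨max C₀ 1, lt_of_lt_of_le one_pos (le_max_right _ _), fun k x => ?_⟩
    have hnorm_eq : ∀ j : ℕ, ‖M ^ j‖ = ‖a ^ j‖ := by
      intro j
      have : a ^ j = (M ^ j).map (algebraMap ℝ ℂ) := by
        rw [ha]
        exact (map_pow ((algebraMap ℝ ℂ).mapMatrix) M j).symm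
      rw [this, ← coe_nnnorm, ← coe_nnnorm, linfty_nnnorm_map]
    have hMk : ‖M ^ k‖ ≤ max C₀ 1 := by
      rcases le_or_gt k N with hkN | hkN
      · exact le_trans (Finset.le_sup' (fun k => ‖M ^ k‖)
          (Finset.mem_range.mpr (Nat.lt_succ_of_le hkN))) (le_max_left _ _)
      · have h1 : ‖a ^ k‖₊ ≤ 1 := hbig k hkN
        rw [hnorm_eq k]
        exact le_trans (by exact_mod_cast h1) (le_max_right _ _)
    calc ‖(M ^ k).mulVec x‖ ≤ ‖M ^ k‖ * ‖x‖ := Matrix.linfty_opNorm_mulVec _ _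
      _ ≤ max C₀ 1 * ‖x‖ := mul_le_mul_of_nonneg_right hMk (norm_nonneg x)

lemma spectrum_split {r : ℕ} (hrn : r ≤ n)
    (hA : ∀ i j : Fin n, r ≤ (i : ℕ) → (j : ℕ) < r → A i j = 0) :
    spectrum ℂ (A.map (algebraMap ℝ ℂ)) ⊆
      spectrum ℂ ((blockA11 hrn A).map (algebraMap ℝ ℂ)) ∪
        spectrum ℂ ((blockA22 r A).map (algebraMap ℝ ℂ)) := by
  intro μ hμ
  rw [spectrum.mem_iff] at hμ
  set B : Matrix (Fin n) (Fin n) ℂ :=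
    algebraMap ℂ (Matrix (Fin n) (Fin n) ℂ) μ - A.map (algebraMap ℝ ℂ) with hB
  have hdet : B.det = 0 := by
    by_contra h'
    exact hμ ((Matrix.isUnit_iff_isUnit_det B).mpr (isUnit_iff_ne_zero.mpr h'))
  have hcast : r + (n - r) = n := Nat.add_sub_cancel' hrn
  set e : Fin r ⊕ Fin (n - r) ≃ Fin n := finSumFinEquiv.trans (finCongr hcast) with he
  set N : Matrix (Fin r ⊕ Fin (n - r)) (Fin r ⊕ Fin (n - r)) ℂ := B.submatrix e e with hN
  have hdetN : N.det = 0 := by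
    rw [hN, Matrix.det_submatrix_equiv_self, hdet]
  have hval_inl : ∀ i : Fin r, ((e (Sum.inl i) : Fin n) : ℕ) = (i : ℕ) := by
    intro i; simp [he, finSumFinEquiv]
  have hval_inr : ∀ i : Fin (n - r), ((e (Sum.inr i) : Fin n) : ℕ) = r + (i : ℕ) := by
    intro i; simp [he, finSumFinEquiv]
  have hblocks : N = Matrix.fromBlocks
      (algebraMap ℂ (Matrix (Fin r) (Fin r) ℂ) μ - (blockA11 hrn A).map (algebraMap ℝ ℂ))
      (N.toBlocks₁₂) 0
      (algebraMap ℂ (Matrix (Fin (n - r)) (Fin (n - r)) ℂ) μ -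
        (blockA22 r A).map (algebraMap ℝ ℂ)) := by
    ext i j
    cases i with
    | inl i => cases j with
      | inl j =>
        simp only [hN, Matrix.submatrix_apply, hB, Matrix.sub_apply, Matrix.fromBlocks_apply₁₁,
          Matrix.algebraMap_matrix_apply, Matrix.map_apply, blockA11]
        have hij : (e (Sum.inl i) = e (Sum.inl j)) ↔ (i = j) := by
          simp [Equiv.apply_eq_iff_eq]
        have hAe : A (e (Sum.inl i)) (e (Sum.inl j)) =
            A (Fin.castLE hrn i) (Fin.castLE hrn j) := by
          congr 1 <;> ext <;> simp [hval_inl]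
        rw [hAe]
        by_cases hh : i = j
        · simp [hh, hij]
        · simp [hh, hij.not.mpr hh]
      | inr j =>
        simp [Matrix.fromBlocks_apply₁₂, hN, Matrix.toBlocks₁₂]
    | inr i => cases j with
      | inl j =>
        simp only [hN, Matrix.submatrix_apply, hB, Matrix.sub_apply, Matrix.fromBlocks_apply₂₁,
          Matrix.algebraMap_matrix_apply, Matrix.map_apply, Matrix.zero_apply]
        have hne : ¬(e (Sum.inr i) = e (Sum.inl j)) := by
          intro hcon
          have := congrArg (fun x : Fin n => (x : ℕ)) hcon
          simp [hval_inl, hval_inr] at this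
          omega
        have hAz : A (e (Sum.inr i)) (e (Sum.inl j)) = 0 := by
          apply hA
          · rw [hval_inr]; omega
          · rw [hval_inl]; exact j.2
        simp [hne, hAz]
      | inr j =>
        simp only [hN, Matrix.submatrix_apply, hB, Matrix.sub_apply, Matrix.fromBlocks_apply₂₂,
          Matrix.algebraMap_matrix_apply, Matrix.map_apply, blockA22]
        have hij : (e (Sum.inr i) = e (Sum.inr j)) ↔ (i = j) := by
          simp [Equiv.apply_eq_iff_eq]
        have hAe : A (e (Sum.inr i)) (e (Sum.inr j)) =
            A ⟨r + i.1, by have := i.2; omega⟩ ⟨r + j.1, by have := j.2; omega⟩ := by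
          congr 1 <;> ext <;> simp [hval_inr]
        rw [hAe]
        by_cases hh : i = j
        · simp [hh, hij]
        · simp [hh, hij.not.mpr hh]
  rw [hblocks, Matrix.det_fromBlocks_zero₂₁] at hdetN
  rcases mul_eq_zero.mp hdetN with h1 | h2
  · left
    rw [spectrum.mem_iff]
    intro hu
    rw [Matrix.isUnit_iff_isUnit_det, isUnit_iff_ne_zero] at hu
    exact hu h1
  · right
    rw [spectrum.mem_iff]
    intro hu
    rw [Matrix.isUnit_iff_isUnit_det, isUnit_iff_ne_zero] at hu
    exact hu h2

end Aux

theorem pmax_isCSet_of_lt_alphaStar {n m r : ℕ} (hrn : r ≤ n)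
    (A : Matrix (Fin n) (Fin n) ℝ) (E : Matrix (Fin n) (Fin m) ℝ)
    (X : Set (Fin n → ℝ)) (D : Set (Fin m → ℝ))
    (hA1 : Assumption1 hrn A E X D) (hA2 : Assumption2 hrn A)
    (α : ℝ) (hα : 0 < α) (hlt : α < alphaStar A E X D) :
    IsCSet (Pmax A E X D α) := by
  obtain ⟨hXconv, hXcomp, hX0⟩ := hA1.hX
  have hPmaxRPI := pmax_isRPI A E X D α
  refine ⟨?_, ?_, ?_⟩
  · -- Convexity
    have h1 : convexHull ℝ (Pmax A E X D α) ⊆ Pmax A E X D α :=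
      subset_pmax A E X D α (isRPI_convexHull A E X D α hXconv hPmaxRPI)
    have h2 : convexHull ℝ (Pmax A E X D α) = Pmax A E X D α :=
      Set.Subset.antisymm h1 (subset_convexHull ℝ _)
    rw [← h2]
    exact convex_convexHull ℝ _
  · -- Compactness
    have h1 : closure (Pmax A E X D α) ⊆ Pmax A E X D α :=
      subset_pmax A E X D α (isRPI_closure A E X D α hXcomp.isClosed hPmaxRPI)
    exact hXcomp.of_isClosed_subset (isClosed_of_closure_subset h1) hPmaxRPI.1
  · -- 0 in the interior
    have hSne : {γ : ℝ | 0 < γ ∧ Rinf A E D γ ⊆ X}.Nonempty := by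
      by_contra hS
      rw [Set.not_nonempty_iff_eq_empty] at hS
      rw [alphaStar, hS, Real.sSup_empty] at hlt
      linarith
    obtain ⟨β, hβmem, hαβ⟩ := exists_lt_of_lt_csSup hSne hlt
    obtain ⟨hβpos, hβX⟩ := hβmem
    set c : ℝ := α / β with hc
    have hc0 : 0 < c := div_pos hα hβpos
    have hc1 : c < 1 := (div_lt_one hβpos).mpr hαβ
    have h1c : (0 : ℝ) < 1 - c := by linarith
    have hRk : ∀ k, Rseq A E D α k ⊆ c • X := by
      intro k
      rw [Rseq_scale A E D α (ne_of_gt hβpos) k]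
      exact Set.smul_set_mono ((Set.subset_iUnion (fun k => Rseq A E D β k) k).trans hβX)
    obtain ⟨ε, hεpos, hball⟩ : ∃ ε > 0, Metric.closedBall (0 : Fin n → ℝ) ε ⊆ X := by
      rw [mem_interior_iff_mem_nhds, Metric.mem_nhds_iff] at hX0
      obtain ⟨δ, hδ, hb⟩ := hX0
      exact ⟨δ / 2, by positivity, (Metric.closedBall_subset_ball (by linarith)).trans hb⟩
    have hstab : StrictlyStable A := fun μ hμ =>
      (spectrum_split A hrn hA1.lowerLeftA hμ).elim (hA2.1 μ) (hA2.2 μ)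
    obtain ⟨C, hCpos, hpow⟩ := exists_pow_bound A hstab
    set ε' : ℝ := (1 - c) * ε / C with hε'def
    have hε'pos : 0 < ε' := div_pos (mul_pos h1c hεpos) hCpos
    set P : Set (Fin n → ℝ) :=
      ⋃ k : ℕ, ((A ^ k).mulVec '' Metric.closedBall (0 : Fin n → ℝ) ε' + Rseq A E D α k)
      with hPdef
    have hPX : P ⊆ X := by
      rintro x hx
      rw [hPdef, Set.mem_iUnion] at hx
      obtain ⟨k, hx⟩ := hx
      rw [Set.mem_add] at hx
      obtain ⟨y, ⟨b, hb, rfl⟩, z, hz, rfl⟩ := hx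
      obtain ⟨w, hwX, rfl⟩ := hRk k hz
      have hyb : ‖(A ^ k).mulVec b‖ ≤ (1 - c) * ε := by
        calc ‖(A ^ k).mulVec b‖ ≤ C * ‖b‖ := hpow k b
          _ ≤ C * ε' := mul_le_mul_of_nonneg_left (mem_closedBall_zero_iff.mp hb) hCpos.le
          _ = (1 - c) * ε := by rw [hε'def]; field_simp
      set w' : Fin n → ℝ := (1 - c)⁻¹ • (A ^ k).mulVec b with hw'
      have hw'X : w' ∈ X := by
        apply hball
        rw [mem_closedBall_zero_iff, hw', norm_smul, Real.norm_eq_abs,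
          abs_of_pos (inv_pos.mpr h1c)]
        calc (1 - c)⁻¹ * ‖(A ^ k).mulVec b‖ ≤ (1 - c)⁻¹ * ((1 - c) * ε) :=
              mul_le_mul_of_nonneg_left hyb (inv_pos.mpr h1c).le
          _ = ε := by field_simp
      have hxeq : (A ^ k).mulVec b + c • w = c • w + (1 - c) • w' := by
        rw [hw', smul_inv_smul₀ (ne_of_gt h1c)]
        abel
      rw [hxeq]
      exact hXconv hwX hw'X hc0.le h1c.le (by ring)
    have hPinv : ∀ x ∈ P, ∀ d ∈ α • D, A.mulVec x + E.mulVec d ∈ P := by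
      intro x hx d hd
      rw [hPdef, Set.mem_iUnion] at hx
      obtain ⟨k, hx⟩ := hx
      rw [Set.mem_add] at hx
      obtain ⟨y, ⟨b, hb, rfl⟩, z, hz, rfl⟩ := hx
      rw [hPdef, Set.mem_iUnion]
      refine ⟨k + 1, ?_⟩
      have heq : A.mulVec ((A ^ k).mulVec b + z) + E.mulVec d =
          (A ^ (k + 1)).mulVec b + (A.mulVec z + E.mulVec d) := by
        rw [Matrix.mulVec_add, Matrix.mulVec_mulVec, ← pow_succ']
        abel
      rw [heq]
      apply Set.add_mem_add
      · exact Set.mem_image_of_mem _ hb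
      · show A.mulVec z + E.mulVec d ∈ Rseq A E D α (k + 1)
        exact Set.add_mem_add (Set.mem_image_of_mem _ hz) (Set.mem_image_of_mem _ hd)
    have hPRPI : IsRPI A E X D α P := ⟨hPX, hPinv⟩
    have hballP : Metric.ball (0 : Fin n → ℝ) ε' ⊆ P := by
      intro b hb
      rw [hPdef, Set.mem_iUnion]
      refine ⟨0, ?_⟩
      have h0 : (A ^ 0).mulVec b + 0 = b := by
        rw [pow_zero, Matrix.one_mulVec, add_zero]
      rw [← h0]
      apply Set.add_mem_add
      · exact Set.mem_image_of_mem _ (Metric.ball_subset_closedBall hb)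
      · show (0 : Fin n → ℝ) ∈ Rseq A E D α 0
        rfl
    exact mem_interior.mpr ⟨Metric.ball 0 ε', hballP.trans (subset_pmax A E X D α hPRPI),
      Metric.isOpen_ball, Metric.mem_ball_self hε'pos⟩

end RPIScaling
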